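/- Let k'/k be a finite purely inseparable extension of fields of characteristic p > 0, let λ ∈ ℤ, and set K = k'(λ). Then: (i) for every x ∈ (k')^× one has x^λ ∈ K, so the group (k')^× acts k-linearly on the k-vector space K by x · v = x^λ v; (ii) the only k-subspaces W of K satisfying x^λ·W ⊆ W for all x ∈ (k')^× are {0} and K. In particular, K is an irreducible k-linear representation of the group (k')^× of dimension [k'(λ) : k]. (This realizes the simple module L_C(λ) of Theorem: dim L_C(λ) = [k'(λ):k] for C = R_{k'/k}(G_m), at the level of groups of k-points.) -/

import Mathlib

/-- Let k'/k be a finite purely inseparable extension of fields of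
characteristic p > 0, λ ∈ ℤ and K = k'(λ).  Then (i) x^λ ∈ K for every x ∈ (k')ˣ,
so (k')ˣ acts k-linearly on K by x · v = x^λ v, and (ii) the only k-subspaces W of K
with x^λ·W ⊆ W for all x ∈ (k')ˣ are {0} and K; so K is an irreducible representation
of (k')ˣ of dimension [k'(λ) : k]. -/
theorem stmt_4 (p : ℕ) [Fact p.Prime] (k k' : Type*) [Field k] [Field k']
    [Algebra k k'] [CharP k p] [IsPurelyInseparable k k'] [FiniteDimensional k k']
    (lam : ℤ) (K : IntermediateField k k')
    (hK : K = IntermediateField.adjoin k {y : k' | ∃ x : k', x ≠ 0 ∧ y = x ^ lam}) :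
    (∀ x : k', x ≠ 0 → x ^ lam ∈ K) ∧
    (∀ W : Submodule k k', (∀ w ∈ W, w ∈ K) →
      (∀ x : k', x ≠ 0 → ∀ w ∈ W, x ^ lam * w ∈ W) →
      W = ⊥ ∨ (W : Set k') = (K : Set k')) := by
  have hgen : ∀ x : k', x ≠ 0 → x ^ lam ∈ K := by
    intro x hx
    rw [hK]
    exact IntermediateField.subset_adjoin k _ ⟨x, hx, rfl⟩
  refine ⟨hgen, ?_⟩
  intro W hWK hWinv
  by_cases hbot : W = ⊥
  · exact Or.inl hbot
  right
  -- the stabilizer subalgebra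
  let S : Subalgebra k k' :=
    { carrier := {y : k' | ∀ w ∈ W, y * w ∈ W}
      mul_mem' := by
        intro a b ha hb w hw
        rw [mul_assoc]
        exact ha _ (hb w hw)
      add_mem' := by
        intro a b ha hb w hw
        rw [add_mul]
        exact W.add_mem (ha w hw) (hb w hw)
      algebraMap_mem' := by
        intro r w hw
        have : algebraMap k k' r * w = r • w := (Algebra.smul_def r w).symm
        rw [this]
        exact W.smul_mem r hw }
  have hSK : (K : Set k') ⊆ S := by
    have halg : Algebra.IsAlgebraic k k' := Algebra.IsAlgebraic.of_finite k k'
    have hKsub : K.toSubalgebra =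
        Algebra.adjoin k {y : k' | ∃ x : k', x ≠ 0 ∧ y = x ^ lam} := by
      rw [hK]
      exact IntermediateField.adjoin_toSubalgebra_of_isAlgebraic
        (fun x _ => Algebra.IsAlgebraic.isAlgebraic x)
    intro z hz
    have hz' : z ∈ K.toSubalgebra := hz
    rw [hKsub] at hz'
    have hle : Algebra.adjoin k {y : k' | ∃ x : k', x ≠ 0 ∧ y = x ^ lam} ≤ S := by
      apply Algebra.adjoin_le
      rintro y ⟨x, hx, rfl⟩
      intro w hw
      exact hWinv x hx w hw
    exact hle hz'
  -- pick a nonzero element of W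
  obtain ⟨w, hwW, hw0⟩ : ∃ w ∈ W, w ≠ 0 := by
    by_contra h
    push_neg at h
    apply hbot
    ext v
    simp only [Submodule.mem_bot]
    exact ⟨fun hv => h v hv, fun hv => hv ▸ W.zero_mem⟩
  apply Set.Subset.antisymm
  · intro v hv; exact hWK v hv
  · intro z hz
    have hwK : w ∈ K := hWK w hwW
    have hzw : z * w⁻¹ ∈ K := K.mul_mem hz (K.inv_mem hwK)
    have := hSK hzw w hwW
    rwa [mul_assoc, inv_mul_cancel₀ hw0, mul_one] at this
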